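/- The matrix N is the Moore–Penrose pseudo-inverse of M = Q g Q; explicitly, N satisfies the four Penrose conditions M N M = M, N M N = N, (M N)ᵀ = M N, and (N M)ᵀ = N M. Moreover J N = 0 (so J M† u = 0 for every vector u ∈ ℝⁿ). -/
import Mathlib


open Matrix

/-- `N` is the Moore–Penrose pseudo-inverse of `M = Q g Q`: it satisfies the four Penrose
conditions `M N M = M`, `N M N = N`, `(M N)ᵀ = M N`, `(N M)ᵀ = N M`; moreover `J N = 0`,
so `J (M† u) = 0` for every vector `u`. -/
theorem N_isPseudoInverse_of_QgQ {n m : ℕ} (hm : 0 < m) (hmn : m < n)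
    (J : Matrix (Fin m) (Fin n) ℝ) (hJ : J.rank = m)
    (g : Matrix (Fin n) (Fin n) ℝ) (hg : g.PosDef)
    (hJJ : IsUnit (J * Jᵀ).det) (hJgJ : IsUnit (J * g⁻¹ * Jᵀ).det)
    (Q : Matrix (Fin n) (Fin n) ℝ)
    (hQ : Q = 1 - Jᵀ * (J * Jᵀ)⁻¹ * J)
    (M N : Matrix (Fin n) (Fin n) ℝ)
    (hM : M = Q * g * Q)
    (hN : N = g⁻¹ - g⁻¹ * Jᵀ * (J * g⁻¹ * Jᵀ)⁻¹ * J * g⁻¹) :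
    M * N * M = M ∧ N * M * N = N ∧ (M * N)ᵀ = M * N ∧ (N * M)ᵀ = N * M ∧
      J * N = 0 ∧ ∀ u : Fin n → ℝ, J *ᵥ (N *ᵥ u) = 0 := by
  have hgdet : IsUnit g.det := isUnit_iff_ne_zero.mpr (ne_of_gt hg.det_pos)
  have hginv : g⁻¹ * g = 1 := nonsing_inv_mul g hgdet
  have hginv' : g * g⁻¹ = 1 := mul_nonsing_inv g hgdet
  have hgsym : gᵀ = g := hg.1
  have hgisym : (g⁻¹)ᵀ = g⁻¹ := by
    rw [transpose_nonsing_inv, hgsym]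
  have hJJsym : ((J * Jᵀ)⁻¹)ᵀ = (J * Jᵀ)⁻¹ := by
    rw [transpose_nonsing_inv]; congr 1; simp [transpose_mul]
  have hKsym : ((J * g⁻¹ * Jᵀ)⁻¹)ᵀ = (J * g⁻¹ * Jᵀ)⁻¹ := by
    rw [transpose_nonsing_inv]; congr 1
    simp [transpose_mul, hgisym, Matrix.mul_assoc]
  -- J * Q = 0
  have hJQ : J * Q = 0 := by
    rw [hQ]
    have : J * (Jᵀ * (J * Jᵀ)⁻¹ * J) = J := by
      rw [show J * (Jᵀ * (J * Jᵀ)⁻¹ * J) = (J * Jᵀ * (J * Jᵀ)⁻¹) * J by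
        simp [Matrix.mul_assoc], mul_nonsing_inv _ hJJ, Matrix.one_mul]
    rw [Matrix.mul_sub, Matrix.mul_one, this, sub_self]
  -- Qᵀ = Q
  have hQsym : Qᵀ = Q := by
    rw [hQ]
    simp [transpose_sub, transpose_mul, hJJsym, Matrix.mul_assoc]
  have hQJ : Q * Jᵀ = 0 := by
    have := congrArg Matrix.transpose hJQ
    rwa [transpose_mul, hQsym, transpose_zero] at this
  -- Q * Q = Q
  have hQQ : Q * Q = Q := by
    nth_rewrite 2 [hQ]
    rw [Matrix.mul_sub, Matrix.mul_one, show Q * (Jᵀ * (J * Jᵀ)⁻¹ * J) =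
      (Q * Jᵀ) * ((J * Jᵀ)⁻¹ * J) by simp [Matrix.mul_assoc], hQJ, Matrix.zero_mul,
      sub_zero]
  -- J * N = 0
  have hJN : J * N = 0 := by
    rw [hN, Matrix.mul_sub]
    have : J * (g⁻¹ * Jᵀ * (J * g⁻¹ * Jᵀ)⁻¹ * J * g⁻¹) =
        ((J * g⁻¹ * Jᵀ) * (J * g⁻¹ * Jᵀ)⁻¹) * (J * g⁻¹) := by
      simp [Matrix.mul_assoc]
    rw [this, mul_nonsing_inv _ hJgJ, Matrix.one_mul, sub_self]
  -- Nᵀ = N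
  have hNsym : Nᵀ = N := by
    rw [hN]
    simp only [transpose_sub, transpose_mul, transpose_transpose, hgisym, ← Matrix.mul_assoc, hKsym]
  have hNJ : N * Jᵀ = 0 := by
    have := congrArg Matrix.transpose hJN
    rwa [transpose_mul, hNsym, transpose_zero] at this
  -- N * g = 1 - g⁻¹ * Jᵀ * K * J
  have hNg : N * g = 1 - g⁻¹ * Jᵀ * (J * g⁻¹ * Jᵀ)⁻¹ * J := by
    rw [hN, Matrix.sub_mul, hginv, Matrix.mul_assoc _ g⁻¹ g, hginv, Matrix.mul_one]
  -- N * Q = N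
  have hNQ : N * Q = N := by
    rw [hQ, Matrix.mul_sub, Matrix.mul_one, show N * (Jᵀ * (J * Jᵀ)⁻¹ * J) =
      (N * Jᵀ) * ((J * Jᵀ)⁻¹ * J) by simp [Matrix.mul_assoc], hNJ, Matrix.zero_mul,
      sub_zero]
  -- N * M = Q
  have hNM : N * M = Q := by
    rw [hM, show N * (Q * g * Q) = (N * Q) * g * Q by simp [Matrix.mul_assoc], hNQ,
      hNg, Matrix.sub_mul, Matrix.one_mul, show g⁻¹ * Jᵀ * (J * g⁻¹ * Jᵀ)⁻¹ * J * Q =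
      g⁻¹ * Jᵀ * (J * g⁻¹ * Jᵀ)⁻¹ * (J * Q) by simp [Matrix.mul_assoc], hJQ,
      Matrix.mul_zero, sub_zero]
  -- M * N = Q
  have hMN : M * N = Q := by
    have := congrArg Matrix.transpose hNM
    rwa [transpose_mul, hNsym, hQsym, show Mᵀ = M by
      rw [hM]; simp only [transpose_mul, hQsym, hgsym, Matrix.mul_assoc]] at this
  -- Q * N = N
  have hQN : Q * N = N := by
    have := congrArg Matrix.transpose hNQ
    rwa [transpose_mul, hNsym, hQsym] at this
  -- Q * M = M
  have hQM : Q * M = M := by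
    rw [hM, ← Matrix.mul_assoc, ← Matrix.mul_assoc, hQQ]
  refine ⟨?_, ?_, ?_, ?_, hJN, ?_⟩
  · rw [hMN, hQM]
  · rw [hNM, hQN]
  · rw [hMN, hQsym]
  · rw [hNM, hQsym]
  · intro u
    rw [mulVec_mulVec, hJN, zero_mulVec]
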